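/- Fix β > 0, ν > 0 with 2β > ν, constants n₁ ∈ ℕ, and a slowly varying function L together with h₁: ℕ → (0,∞) satisfying h₁(m+1)/h₁(m) → 1. Then the partial sums I_n := (e^{ν(n-1)}/(h₁(n-1)e^{2β(n-1)}L(e^{2n-2}))) Σ_{m=n₁}^{n-2} L(e^{2m}) e^{2βm} h₁(m) e^{-νm} (1 - (h₁(m+1)/h₁(m)) e^{-ν}) converge, as n → ∞, to (1 - e^{-ν}) e^{ν - 2β}/(1 - e^{ν - 2β}). -/

import Mathlib

open Filter

/-- If `|v (n+1)| ≤ q * |v n| + e n` eventually, with `0 ≤ q < 1` and `e → 0`, `e ≥ 0`,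
then `v → 0`. -/
lemma aux_contraction (v e : ℕ → ℝ) (q : ℝ) (hq0 : 0 ≤ q) (hq1 : q < 1)
    (he0 : ∀ n, 0 ≤ e n)
    (hrec : ∀ᶠ n in atTop, |v (n + 1)| ≤ q * |v n| + e n)
    (he : Tendsto e atTop (nhds 0)) :
    Tendsto v atTop (nhds 0) := by
  rw [Metric.tendsto_atTop]
  intro ε hε
  have h1q : (0:ℝ) < 1 - q := by linarith
  have hε' : 0 < ε / 2 * (1 - q) := by positivity
  have hsmall : ∀ᶠ n in atTop, e n ≤ ε / 2 * (1 - q) := by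
    obtain ⟨N₀, hN₀⟩ := Metric.tendsto_atTop.mp he (ε / 2 * (1 - q)) hε'
    filter_upwards [eventually_ge_atTop N₀] with n hn'
    have hn := hN₀ n hn'
    have := abs_lt.mp (by simpa [Real.dist_eq] using hn)
    linarith [this.2]
  obtain ⟨M, hM⟩ := eventually_atTop.mp (hrec.and hsmall)
  -- inductive bound
  have key : ∀ k : ℕ, |v (M + k)| ≤ q ^ k * |v M| + ε / 2 := by
    intro k
    induction k with
    | zero => simp; linarith [abs_nonneg (v M)]
    | succ k ih =>
        have h := hM (M + k) (Nat.le_add_right _ _)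
        have : |v (M + k + 1)| ≤ q * |v (M + k)| + ε / 2 * (1 - q) := le_trans h.1 (by linarith [h.2])
        have h2 : q * |v (M + k)| ≤ q * (q ^ k * |v M| + ε / 2) :=
          mul_le_mul_of_nonneg_left ih hq0
        calc |v (M + (k + 1))| = |v (M + k + 1)| := by rw [Nat.add_assoc]
          _ ≤ q * (q ^ k * |v M| + ε / 2) + ε / 2 * (1 - q) := by linarith
          _ = q ^ (k + 1) * |v M| + ε / 2 := by ring
  -- choose k₀ with q^k * |v M| < ε/2
  have hpow : Tendsto (fun k : ℕ => q ^ k * |v M|) atTop (nhds 0) := by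
    simpa using (tendsto_pow_atTop_nhds_zero_of_lt_one hq0 hq1).mul_const |v M|
  obtain ⟨K, hK⟩ := Metric.tendsto_atTop.mp hpow (ε / 2) (by linarith)
  refine ⟨M + K, fun n hn => ?_⟩
  have hMn : M ≤ n := le_trans (Nat.le_add_right _ _) hn
  have hnk : n = M + (n - M) := by omega
  have hKle : K ≤ n - M := by omega
  have h1 := key (n - M)
  have h2 := hK (n - M) hKle
  have h2' : q ^ (n - M) * |v M| < ε / 2 := by
    rw [Real.dist_eq, sub_zero] at h2
    exact lt_of_le_of_lt (le_abs_self _) h2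
  rw [Real.dist_eq, sub_zero]
  calc |v n| = |v (M + (n - M))| := by rw [← hnk]
    _ ≤ q ^ (n - M) * |v M| + ε / 2 := h1
    _ < ε := by linarith

/-- Fixed point iteration: if `u (N+1) = q N * u N + w N` eventually with `q → t ∈ [0,1)`
and `w → c`, then `u → c / (1 - t)`. -/
lemma aux_rec_lim (u q w : ℕ → ℝ) (t c : ℝ) (ht0 : 0 ≤ t) (ht1 : t < 1)
    (hq : Tendsto q atTop (nhds t)) (hw : Tendsto w atTop (nhds c))
    (hrec : ∀ᶠ N in atTop, u (N + 1) = q N * u N + w N) :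
    Tendsto u atTop (nhds (c / (1 - t))) := by
  set l := c / (1 - t) with hl
  have h1t : (1:ℝ) - t ≠ 0 := by linarith
  set v : ℕ → ℝ := fun N => u N - l with hv
  set e : ℕ → ℝ := fun N => |w N + (q N - 1) * l| with he
  have herr : Tendsto (fun N => w N + (q N - 1) * l) atTop (nhds 0) := by
    have : Tendsto (fun N => w N + (q N - 1) * l) atTop (nhds (c + (t - 1) * l)) :=
      hw.add (((hq.sub_const 1).mul_const l))
    have hzero : c + (t - 1) * l = 0 := by
      rw [hl]
      have hx : (t - 1) * (c / (1 - t)) = -c := by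
        rw [mul_div_assoc', div_eq_iff h1t]; ring
      linarith
    rwa [hzero] at this
  have heto : Tendsto e atTop (nhds 0) := by
    have := herr.abs
    simpa using this
  set q' : ℝ := (1 + t) / 2 with hq'
  have hq'0 : 0 ≤ q' := by positivity
  have hq'1 : q' < 1 := by rw [hq']; linarith
  have hqev : ∀ᶠ N in atTop, |q N| ≤ q' := by
    have : ∀ᶠ N in atTop, q N ∈ Set.Ioo (t - (1 - t)/2) (t + (1 - t)/2) := by
      apply hq (Ioo_mem_nhds (by linarith) (by linarith))
    filter_upwards [this] with N hN
    rw [abs_le]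
    constructor
    · have := hN.1; rw [hq']; linarith
    · have := hN.2; rw [hq']; linarith
  have hrec' : ∀ᶠ N in atTop, |v (N + 1)| ≤ q' * |v N| + e N := by
    filter_upwards [hrec, hqev] with N h1 h2
    have : v (N + 1) = q N * v N + (w N + (q N - 1) * l) := by
      simp only [hv, h1]; ring
    calc |v (N + 1)| = |q N * v N + (w N + (q N - 1) * l)| := by rw [this]
      _ ≤ |q N * v N| + |w N + (q N - 1) * l| := abs_add_le _ _
      _ ≤ q' * |v N| + e N := by
          rw [abs_mul]
          gcongr
  have hv0 : Tendsto v atTop (nhds 0) :=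
    aux_contraction v e q' hq'0 hq'1 (fun n => abs_nonneg _) hrec' heto
  have := hv0.add_const l
  simpa [hv] using this

/-- With `L` slowly varying, `h₁` positive with `h₁(m+1)/h₁(m) → 1`, and `0 < ν < 2β`, the
normalized partial sums `I_n` converge to `(1 - e^{-ν}) e^{ν-2β}/(1 - e^{ν-2β})`. -/
theorem stmt15 (L : ℝ → ℝ) (hLpos : ∀ x, 0 < L x)
    (hL : ∀ a : ℝ, 0 < a → Tendsto (fun x => L (a * x) / L x) atTop (nhds 1))
    (h1 : ℕ → ℝ) (hpos : ∀ n, 0 < h1 n)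
    (hratio : Tendsto (fun n : ℕ => h1 (n + 1) / h1 n) atTop (nhds 1))
    (ν β : ℝ) (hν : 0 < ν) (hβ : 0 < β) (hνβ : ν < 2 * β) (n₁ : ℕ) :
    Tendsto (fun n : ℕ =>
        Real.exp (ν * ((n : ℝ) - 1))
            / (h1 (n - 1) * Real.exp (2 * β * ((n : ℝ) - 1)) * L (Real.exp (2 * (n : ℝ) - 2)))
          * ∑ m ∈ Finset.Icc n₁ (n - 2),
              L (Real.exp (2 * (m : ℝ))) * Real.exp (2 * β * (m : ℝ)) * h1 m
                * Real.exp (-ν * (m : ℝ)) * (1 - h1 (m + 1) / h1 m * Real.exp (-ν)))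
      atTop
      (nhds ((1 - Real.exp (-ν)) * Real.exp (ν - 2 * β) / (1 - Real.exp (ν - 2 * β)))) := by
  set t : ℝ := Real.exp (ν - 2 * β) with htdef
  have ht0 : 0 < t := Real.exp_pos _
  have ht1 : t < 1 := by
    rw [htdef]
    exact Real.exp_lt_one_iff.mpr (by linarith)
  set b : ℕ → ℝ := fun m =>
    L (Real.exp (2 * (m : ℝ))) * Real.exp (2 * β * (m : ℝ)) * h1 m * Real.exp (-ν * (m : ℝ))
    with hbdef
  have hbpos : ∀ m, 0 < b m := fun m => by
    have := hLpos (Real.exp (2 * (m : ℝ)))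
    have := hpos m
    positivity
  set c : ℕ → ℝ := fun m => 1 - h1 (m + 1) / h1 m * Real.exp (-ν) with hcdef
  -- ratio of L values
  have hLrat : Tendsto (fun m : ℕ =>
      L (Real.exp (2 * ((m : ℝ) + 1))) / L (Real.exp (2 * (m : ℝ)))) atTop (nhds 1) := by
    have hexp : Tendsto (fun m : ℕ => Real.exp (2 * (m : ℝ))) atTop atTop :=
      Real.tendsto_exp_atTop.comp
        ((tendsto_natCast_atTop_atTop (R := ℝ)).const_mul_atTop (by norm_num))
    have := (hL (Real.exp 2) (Real.exp_pos 2)).comp hexp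
    refine this.congr fun m => ?_
    simp only [Function.comp]
    rw [← Real.exp_add]
    ring_nf
  -- ratio b(m+1)/b m
  have hbr : Tendsto (fun m : ℕ => b (m + 1) / b m) atTop (nhds (Real.exp (2 * β - ν))) := by
    have heq : ∀ m : ℕ, b (m + 1) / b m =
        L (Real.exp (2 * ((m : ℝ) + 1))) / L (Real.exp (2 * (m : ℝ)))
          * (h1 (m + 1) / h1 m) * Real.exp (2 * β - ν) := by
      intro m
      have hL1 := (hLpos (Real.exp (2 * ((m : ℝ) + 1)))).ne'
      have hL2 := (hLpos (Real.exp (2 * (m : ℝ)))).ne'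
      have hh1 := (hpos (m + 1)).ne'
      have hh2 := (hpos m).ne'
      rw [hbdef]
      push_cast
      rw [show 2 * β * ((m : ℝ) + 1) = 2 * β * m + 2 * β by ring,
        show -ν * ((m : ℝ) + 1) = -ν * m + -ν by ring,
        show 2 * β - ν = 2 * β + -ν by ring, Real.exp_add, Real.exp_add, Real.exp_add]
      field_simp
    rw [show Real.exp (2 * β - ν) = 1 * 1 * Real.exp (2 * β - ν) by ring]
    exact Tendsto.congr (fun m => (heq m).symm)
      ((hLrat.mul hratio).mul_const _)
  have hrne : Real.exp (2 * β - ν) ≠ 0 := (Real.exp_pos _).ne'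
  -- q N = b (N+1) / b (N+2) → t
  have hq : Tendsto (fun N : ℕ => b (N + 1) / b (N + 2)) atTop (nhds t) := by
    have hshift : Tendsto (fun N : ℕ => b (N + 2) / b (N + 1)) atTop
        (nhds (Real.exp (2 * β - ν))) := by
      have := hbr.comp (tendsto_add_atTop_nat 1)
      refine this.congr fun N => ?_
      simp only [Function.comp]
    have := hshift.inv₀ hrne
    refine Tendsto.congr (fun N => ?_) (by
      rwa [show (Real.exp (2 * β - ν))⁻¹ = t by
        rw [htdef, ← Real.exp_neg]; ring_nf] at this)
    rw [inv_div]
  have hc : Tendsto c atTop (nhds (1 - Real.exp (-ν))) := by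
    rw [hcdef]
    simpa using (tendsto_const_nhds (x := (1:ℝ))).sub (hratio.mul_const (Real.exp (-ν)))
  -- partial sums
  set S : ℕ → ℝ := fun N => ∑ m ∈ Finset.Icc n₁ N, b m * c m with hSdef
  set u : ℕ → ℝ := fun N => S N / b (N + 1) with hudef
  have hw : Tendsto (fun N => c (N + 1) * (b (N + 1) / b (N + 2))) atTop
      (nhds ((1 - Real.exp (-ν)) * t)) :=
    (hc.comp (tendsto_add_atTop_nat 1)).mul hq
  have hrec : ∀ᶠ N in atTop, u (N + 1) = (b (N + 1) / b (N + 2)) * u N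
      + c (N + 1) * (b (N + 1) / b (N + 2)) := by
    filter_upwards [eventually_ge_atTop n₁] with N hN
    have hS : S (N + 1) = S N + b (N + 1) * c (N + 1) := by
      rw [hSdef]
      exact Finset.sum_Icc_succ_top (Nat.le_succ_of_le hN) _
    have h1' := (hbpos (N + 1)).ne'
    have h2' := (hbpos (N + 2)).ne'
    rw [hudef]
    simp only
    rw [hS]
    field_simp
  have hu : Tendsto u atTop (nhds ((1 - Real.exp (-ν)) * t / (1 - t))) :=
    aux_rec_lim u _ _ t ((1 - Real.exp (-ν)) * t) ht0.le ht1 hq hw hrec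
  -- compose with n ↦ n - 2 and identify the expression
  have hcomp : Tendsto (fun n : ℕ => u (n - 2)) atTop
      (nhds ((1 - Real.exp (-ν)) * t / (1 - t))) :=
    hu.comp (tendsto_sub_atTop_nat 2)
  refine Tendsto.congr' ?_ hcomp
  filter_upwards [eventually_ge_atTop 2] with n hn
  have hcast : ((n - 1 : ℕ) : ℝ) = (n : ℝ) - 1 := by
    have : (1:ℕ) ≤ n := by omega
    push_cast [this]
    ring
  have hidx : n - 2 + 1 = n - 1 := by omega
  rw [hudef]
  simp only
  rw [hidx, hSdef]
  have hsum : (∑ m ∈ Finset.Icc n₁ (n - 2),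
      L (Real.exp (2 * (m : ℝ))) * Real.exp (2 * β * (m : ℝ)) * h1 m
        * Real.exp (-ν * (m : ℝ)) * (1 - h1 (m + 1) / h1 m * Real.exp (-ν)))
      = ∑ m ∈ Finset.Icc n₁ (n - 2), b m * c m := by
    refine Finset.sum_congr rfl fun m _ => ?_
    rw [hbdef, hcdef]
  rw [hsum]
  have hpre : Real.exp (ν * ((n : ℝ) - 1))
      / (h1 (n - 1) * Real.exp (2 * β * ((n : ℝ) - 1)) * L (Real.exp (2 * (n : ℝ) - 2)))
      = 1 / b (n - 1) := by
    rw [hbdef]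
    simp only [hcast]
    rw [show 2 * ((n:ℝ) - 1) = 2 * (n:ℝ) - 2 by ring]
    have hL1 := (hLpos (Real.exp (2 * (n:ℝ) - 2))).ne'
    have hh1 := (hpos (n - 1)).ne'
    rw [show -ν * ((n:ℝ) - 1) = -(ν * ((n:ℝ) - 1)) by ring, Real.exp_neg]
    have he1 := (Real.exp_pos (ν * ((n:ℝ) - 1))).ne'
    field_simp
  rw [hpre, one_div, inv_mul_eq_div]
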